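/- Let n ≥ 1 and let u : ℝⁿ → ℝ be a convex function. Let F := {x ∈ ℝⁿ : u(x) ≤ u(y) for all y ∈ ℝⁿ} be its set of minimum points, and assume: (i) F ≠ ∅ and F ≠ ℝⁿ; (ii) the minimum value of u is 0; (iii) u is affine on each connected component of ℝⁿ ∖ F. Then there exist a unit vector ν ∈ ℝⁿ and β ∈ ℝ such that, setting s(x) := ⟨ν, x⟩ − β, exactly one of the following holds: (a) there exists t₁ > 0 with u(x) = max(t₁·s(x), 0) for all x ∈ ℝⁿ; (b) there exist t₁, t₂ > 0 with u(x) = max(t₁·s(x), −t₂·s(x)) for all x ∈ ℝⁿ; (c) there exist t₁, t₂, l₀ > 0 with u(x) = max(t₁·s(x), 0, −t₂·(s(x) + l₀)) for all x ∈ ℝⁿ. -/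

import Mathlib

open MeasureTheory Set Metric Filter
open scoped RealInnerProductSpace Topology ENNReal

noncomputable section

/-- `φ` is a smooth test function compactly supported in `ω`. -/
def IsTestOn {n : ℕ} (ω : Set (EuclideanSpace ℝ (Fin n))) (φ : EuclideanSpace ℝ (Fin n) → ℝ) : Prop :=
  ContDiff ℝ (⊤ : ℕ∞) φ ∧ HasCompactSupport φ ∧ tsupport φ ⊆ ω

private lemma aux_tangent {n : ℕ} {u : EuclideanSpace ℝ (Fin n) → ℝ}
    (hconv : ConvexOn ℝ Set.univ u) {a x₀ : EuclideanSpace ℝ (Fin n)} {γ r : ℝ} (hr : 0 < r)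
    (heq : ∀ y ∈ Metric.ball x₀ r, u y = ⟪a, y⟫ + γ) :
    ∀ y, ⟪a, y⟫ + γ ≤ u y := by
  intro y
  by_cases hd : y = x₀
  · subst hd; rw [← heq y (Metric.mem_ball_self hr)]
  have hd0 : 0 < ‖y - x₀‖ := by
    rw [norm_pos_iff, sub_ne_zero]; exact hd
  set d := ‖y - x₀‖ with hddef
  set ε : ℝ := min (r / (2 * d)) (1/2) with hεdef
  have hε0 : 0 < ε := lt_min (div_pos hr (by positivity)) (by norm_num)
  have hε1 : ε ≤ 1/2 := min_le_right _ _
  have hεd : ε * d < r := by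
    have h1 : ε ≤ r / (2 * d) := min_le_left _ _
    have h2 : ε * d ≤ (r / (2 * d)) * d := by nlinarith
    have h3 : (r / (2 * d)) * d = r / 2 := by field_simp
    nlinarith
  set z := x₀ + ε • (y - x₀) with hzdef
  have hz : z ∈ Metric.ball x₀ r := by
    rw [Metric.mem_ball, dist_eq_norm]
    have : z - x₀ = ε • (y - x₀) := by rw [hzdef]; abel
    rw [this, norm_smul, Real.norm_eq_abs, abs_of_pos hε0]
    exact hεd
  have hcomb : z = (1 - ε) • x₀ + ε • y := by
    rw [hzdef]; module
  have h1 : u ((1 - ε) • x₀ + ε • y) ≤ (1 - ε) * u x₀ + ε * u y :=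
    hconv.2 (Set.mem_univ x₀) (Set.mem_univ y) (by linarith) hε0.le (by ring)
  rw [← hcomb, heq z hz, heq x₀ (Metric.mem_ball_self hr)] at h1
  have h4 : ⟪a, z⟫ = (1 - ε) * ⟪a, x₀⟫ + ε * ⟪a, y⟫ := by
    rw [hcomb, inner_add_right, real_inner_smul_right, real_inner_smul_right]
  rw [h4] at h1
  have h5 : ε * (⟪a, y⟫ + γ) ≤ ε * u y := by linarith
  exact le_of_mul_le_mul_left h5 hε0

private lemma aux_clos {n : ℕ} {O : Set (EuclideanSpace ℝ (Fin n))}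
    {x z : EuclideanSpace ℝ (Fin n)} (hx : x ∈ O)
    (hz : z ∈ closure (connectedComponentIn O x)) (hzO : z ∈ O) :
    z ∈ connectedComponentIn O x := by
  have hC : IsPreconnected (connectedComponentIn O x) := isPreconnected_connectedComponentIn
  have h2 : IsPreconnected (insert z (connectedComponentIn O x)) :=
    hC.subset_closure (Set.subset_insert _ _)
      (Set.insert_subset hz subset_closure)
  exact h2.subset_connectedComponentIn
    (Set.mem_insert_of_mem _ (mem_connectedComponentIn hx))
    (Set.insert_subset hzO (connectedComponentIn_subset O x)) (Set.mem_insert z _)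

set_option maxHeartbeats 2000000 in
/-- **Classification of convex functions affine off their facet.** If a convex `u : ℝⁿ → ℝ`
has a nonempty proper set `F` of minimum points, attains minimum value `0`, and is affine on
each connected component of `ℝⁿ ∖ F`, then up to a rotation and shift (a unit vector `ν` and a
scalar `β`, with `s(x) = ⟨ν, x⟩ − β`) exactly one of three piecewise-linear forms holds. -/
theorem stmt_7 {n : ℕ} (hn : 1 ≤ n)
    (u : EuclideanSpace ℝ (Fin n) → ℝ)
    (hconv : ConvexOn ℝ Set.univ u)
    (F : Set (EuclideanSpace ℝ (Fin n)))
    (hF : F = {x | ∀ y, u x ≤ u y})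
    (hFne : F.Nonempty) (hFproper : F ≠ Set.univ)
    (hmin : ∀ x ∈ F, u x = 0)
    (haffine : ∀ x ∈ Fᶜ, ∃ (a : EuclideanSpace ℝ (Fin n)) (γ : ℝ),
      ∀ y ∈ connectedComponentIn Fᶜ x, u y = ⟪a, y⟫ + γ) :
    ∃ (ν : EuclideanSpace ℝ (Fin n)) (β : ℝ), ‖ν‖ = 1 ∧
      (let s : EuclideanSpace ℝ (Fin n) → ℝ := fun x => ⟪ν, x⟫ - β
       let A : Prop := ∃ t₁ : ℝ, 0 < t₁ ∧ ∀ x, u x = max (t₁ * s x) 0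
       let B : Prop := ∃ t₁ t₂ : ℝ, 0 < t₁ ∧ 0 < t₂ ∧
         ∀ x, u x = max (t₁ * s x) (-(t₂ * s x))
       let C : Prop := ∃ t₁ t₂ l₀ : ℝ, 0 < t₁ ∧ 0 < t₂ ∧ 0 < l₀ ∧
         ∀ x, u x = max (t₁ * s x) (max 0 (-(t₂ * (s x + l₀))))
       (A ∧ ¬B ∧ ¬C) ∨ (¬A ∧ B ∧ ¬C) ∨ (¬A ∧ ¬B ∧ C)) := by
  classical
  -- basic facts
  obtain ⟨z₀, hz₀F⟩ := hFne
  have hz₀ : u z₀ = 0 := hmin z₀ hz₀F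
  have hz₀' : ∀ y, u z₀ ≤ u y := by rw [hF] at hz₀F; exact hz₀F
  have hmin0 : ∀ y, 0 ≤ u y := fun y => hz₀ ▸ hz₀' y
  have hmemF : ∀ x, x ∈ F ↔ u x = 0 := by
    intro x
    constructor
    · exact fun h => hmin x h
    · intro h; rw [hF]; intro y; rw [h]; exact hmin0 y
  have hmemFc : ∀ x, x ∈ Fᶜ ↔ 0 < u x := by
    intro x
    rw [Set.mem_compl_iff, hmemF]
    constructor
    · exact fun h => lt_of_le_of_ne (hmin0 x) (Ne.symm h)
    · exact fun h => (ne_of_lt h).symm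
  have hFc_open : IsOpen Fᶜ := by
    have hu_cont : Continuous u := by
      rw [← continuousOn_univ]
      exact ConvexOn.continuousOn isOpen_univ hconv
    have hFclosed : IsClosed F := by
      have : F = ⋂ y, {x | u x ≤ u y} := by rw [hF]; ext x; simp
      rw [this]
      exact isClosed_iInter fun y => isClosed_le hu_cont continuous_const
    exact hFclosed.isOpen_compl
  -- the first component
  obtain ⟨x₀, hx₀F⟩ : ∃ x, x ∉ F := by
    by_contra h; push_neg at h; exact hFproper (Set.eq_univ_of_forall h)
  have hx₀Fc : x₀ ∈ Fᶜ := hx₀F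
  have hux₀ : 0 < u x₀ := (hmemFc x₀).mp hx₀Fc
  obtain ⟨a, γ, ha⟩ := haffine x₀ hx₀Fc
  obtain ⟨r, hr0, hball⟩ : ∃ r > 0, Metric.ball x₀ r ⊆ connectedComponentIn Fᶜ x₀ := by
    obtain ⟨r, hr0, hrsub⟩ := Metric.isOpen_iff.mp hFc_open x₀ hx₀Fc
    exact ⟨r, hr0, ((convex_ball x₀ r).isPreconnected).subset_connectedComponentIn
      (Metric.mem_ball_self hr0) hrsub⟩
  have htang : ∀ y, ⟪a, y⟫ + γ ≤ u y :=
    aux_tangent hconv hr0 (fun y hy => ha y (hball hy))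
  have hax₀ : ⟪a, x₀⟫ + γ = u x₀ := (ha x₀ (mem_connectedComponentIn hx₀Fc)).symm
  have ha0 : a ≠ 0 := by
    rintro rfl
    have h1 := htang z₀
    rw [hz₀] at h1
    rw [inner_zero_left] at hax₀ h1
    linarith
  set t₁ : ℝ := ‖a‖ with ht₁def
  have ht₁ : 0 < t₁ := norm_pos_iff.mpr ha0
  set ν : EuclideanSpace ℝ (Fin n) := (‖a‖⁻¹ : ℝ) • a with hνdef
  have hν : ‖ν‖ = 1 := norm_smul_inv_norm ha0
  set β : ℝ := -γ / ‖a‖ with hβdef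
  set s : EuclideanSpace ℝ (Fin n) → ℝ := fun x => ⟪ν, x⟫ - β with hsdef
  have hνx : ∀ x, ⟪ν, x⟫ = ‖a‖⁻¹ * ⟪a, x⟫ := fun x => real_inner_smul_left a x ‖a‖⁻¹
  have hane : (‖a‖ : ℝ) ≠ 0 := ht₁.ne'
  have hs : ∀ x, t₁ * s x = ⟪a, x⟫ + γ := by
    intro x
    simp only [hsdef, hνx, hβdef, ht₁def]
    field_simp
    ring
  have hνν : ⟪ν, ν⟫ = (1:ℝ) := by
    rw [real_inner_self_eq_norm_sq, hν]; norm_num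
  have hsp : ∀ (c : EuclideanSpace ℝ (Fin n)) (t : ℝ), s (c + t • ν) = s c + t := by
    intro c t
    simp only [hsdef, inner_add_right, real_inner_smul_right, hνν]
    ring
  have hqs : ∀ r : ℝ, ∃ q : EuclideanSpace ℝ (Fin n), s q = r := by
    intro r
    exact ⟨x₀ + (r - s x₀) • ν, by rw [hsp]; ring⟩
  have htangs : ∀ x, t₁ * s x ≤ u x := fun x => by rw [hs]; exact htang x
  clear_value t₁ ν β s
  have hC₀eq : ∀ y ∈ connectedComponentIn Fᶜ x₀, u y = t₁ * s y := by
    intro y hy; rw [ha y hy, hs]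
  have hC₀pos : ∀ y ∈ connectedComponentIn Fᶜ x₀, 0 < s y := by
    intro y hy
    have h1 := (hmemFc y).mp (connectedComponentIn_subset _ _ hy)
    have h2 := hC₀eq y hy
    nlinarith
  have hSgtFc : ∀ x, 0 < s x → x ∈ Fᶜ := by
    intro x hx
    exact (hmemFc x).mpr (lt_of_lt_of_le (mul_pos ht₁ hx) (htangs x))
  have hlinν : IsLinearMap ℝ (fun x : EuclideanSpace ℝ (Fin n) => ⟪ν, x⟫) :=
    ⟨fun x y => inner_add_right _ _ _, fun c x => real_inner_smul_right _ _ _⟩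
  have hSgtC₀ : {x | 0 < s x} ⊆ connectedComponentIn Fᶜ x₀ := by
    have hconvS : Convex ℝ {x : EuclideanSpace ℝ (Fin n) | 0 < s x} := by
      have heq : {x : EuclideanSpace ℝ (Fin n) | 0 < s x} = {x | β < ⟪ν, x⟫} := by
        ext x; simp only [Set.mem_setOf_eq, hsdef]; constructor <;> intro h <;> linarith
      rw [heq]
      exact convex_halfSpace_gt hlinν β
    exact hconvS.isPreconnected.subset_connectedComponentIn
      (hC₀pos x₀ (mem_connectedComponentIn hx₀Fc)) (fun x hx => hSgtFc x hx)
  have hs0F : ∀ x, s x = 0 → u x = 0 := by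
    intro x hx
    by_contra h
    have hxFc : x ∈ Fᶜ := (hmemFc x).mpr (lt_of_le_of_ne (hmin0 x) (Ne.symm h))
    have hxcl : x ∈ closure (connectedComponentIn Fᶜ x₀) := by
      rw [Metric.mem_closure_iff]
      intro ε hε
      refine ⟨x + (ε/2) • ν, hSgtC₀ ?_, ?_⟩
      · show 0 < s (x + (ε/2) • ν)
        rw [hsp, hx]; positivity
      · rw [dist_eq_norm]
        have : x - (x + (ε/2) • ν) = -((ε/2) • ν) := by abel
        rw [this, norm_neg, norm_smul, hν, Real.norm_eq_abs, abs_of_pos (by positivity : (0:ℝ) < ε/2)]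
        linarith
    have hxC₀ := aux_clos hx₀Fc hxcl hxFc
    have := hC₀pos x hxC₀
    linarith
  by_cases hcase : ∀ x, s x ≤ 0 → u x = 0
  · -- Case A
    have hAform : ∀ x, u x = max (t₁ * s x) 0 := by
      intro x
      rcases le_or_gt (s x) 0 with h | h
      · have h1 : t₁ * s x ≤ 0 := by nlinarith
        rw [hcase x h, max_eq_right h1]
      · have h1 : 0 ≤ t₁ * s x := by nlinarith
        rw [hC₀eq x (hSgtC₀ h), max_eq_left h1]
    have hnB : ¬ (∃ t₁' t₂' : ℝ, 0 < t₁' ∧ 0 < t₂' ∧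
        ∀ x, u x = max (t₁' * s x) (-(t₂' * s x))) := by
      rintro ⟨a1, a2, ha1, ha2, hB⟩
      obtain ⟨q, hq⟩ := hqs (-1)
      have h1 := hB q
      have h2 := hcase q (by rw [hq]; norm_num)
      rw [hq, h2] at h1
      have h3 : -(a2 * (-1)) ≤ (0:ℝ) := h1 ▸ le_max_right _ _
      linarith
    have hnC : ¬ (∃ t₁' t₂' l₀' : ℝ, 0 < t₁' ∧ 0 < t₂' ∧ 0 < l₀' ∧
        ∀ x, u x = max (t₁' * s x) (max 0 (-(t₂' * (s x + l₀'))))) := by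
      rintro ⟨a1, a2, a3, ha1, ha2, ha3, hC⟩
      obtain ⟨q, hq⟩ := hqs (-(a3+1))
      have h1 := hC q
      have h2 := hcase q (by rw [hq]; linarith)
      rw [hq, h2] at h1
      have h3 : -(a2 * (-(a3+1) + a3)) ≤ (0:ℝ) :=
        h1 ▸ le_trans (le_max_right _ _) (le_max_right _ _)
      nlinarith
    refine ⟨ν, β, hν, ?_⟩
    have hsx : ∀ x : EuclideanSpace ℝ (Fin n), ⟪ν, x⟫ - β = s x := fun x => by rw [hsdef]
    simp only [hsx]
    exact Or.inl ⟨⟨t₁, ht₁, hAform⟩, hnB, hnC⟩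
  · -- Cases B and C
    push_neg at hcase
    obtain ⟨x₁, hsx₁le, hux₁ne⟩ := hcase
    have hx₁Fc : x₁ ∈ Fᶜ := (hmemFc x₁).mpr (lt_of_le_of_ne (hmin0 x₁) (Ne.symm hux₁ne))
    have hux₁pos : 0 < u x₁ := (hmemFc x₁).mp hx₁Fc
    have hsx₁ : s x₁ < 0 := lt_of_le_of_ne hsx₁le (fun h => hux₁ne (hs0F x₁ h))
    obtain ⟨b, δ, hb⟩ := haffine x₁ hx₁Fc
    obtain ⟨r₁, hr₁0, hball₁⟩ : ∃ r > 0, Metric.ball x₁ r ⊆ connectedComponentIn Fᶜ x₁ := by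
      obtain ⟨r, hr0', hrsub⟩ := Metric.isOpen_iff.mp hFc_open x₁ hx₁Fc
      exact ⟨r, hr0', ((convex_ball x₁ r).isPreconnected).subset_connectedComponentIn
        (Metric.mem_ball_self hr0') hrsub⟩
    have htang₁ : ∀ y, ⟪b, y⟫ + δ ≤ u y :=
      aux_tangent hconv hr₁0 (fun y hy => hb y (hball₁ hy))
    set c : ℝ := ⟪ν, b⟫ with hcdef
    set w : EuclideanSpace ℝ (Fin n) := b - c • ν with hwdef
    have hwv : ⟪ν, w⟫ = 0 := by
      simp only [hwdef, inner_sub_right, real_inner_smul_right, hνν]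
      ring
    clear_value c w
    have hkey : ∀ t : ℝ, t * ⟪b, w⟫ + (c * β + δ) ≤ 0 := by
      intro t
      have hpt : s (β • ν + t • w) = 0 := by
        simp only [hsdef, inner_add_right, real_inner_smul_right, hνν, hwv]
        ring
      have h1 := htang₁ (β • ν + t • w)
      rw [hs0F _ hpt] at h1
      have hexp : (⟪b, β • ν + t • w⟫ : ℝ) = c * β + t * ⟪b, w⟫ := by
        rw [inner_add_right, real_inner_smul_right b w t, real_inner_smul_right b ν β,
          ← real_inner_comm b ν, ← hcdef]
        ring
      rw [hexp] at h1
      linarith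
    have hbw : ⟪b, w⟫ = ‖w‖^2 := by
      have hb' : b = w + c • ν := by rw [hwdef]; abel
      rw [hb', inner_add_left, real_inner_smul_left, hwv]
      rw [real_inner_self_eq_norm_sq]
      ring
    have hw0 : w = 0 := by
      by_contra hw0
      have hn : 0 < ‖w‖^2 := by
        have := norm_pos_iff.mpr hw0
        positivity
      have h1 := hkey ((1 - (c * β + δ)) / ‖w‖^2)
      rw [hbw] at h1
      have h2 : ((1 - (c * β + δ)) / ‖w‖^2) * ‖w‖^2 = 1 - (c * β + δ) :=
        div_mul_cancel₀ _ hn.ne'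
      linarith
    have hb_eq : b = c • ν := by
      rw [hwdef] at hw0
      exact sub_eq_zero.mp hw0
    have hcβδ : c * β + δ ≤ 0 := by have := hkey 0; linarith
    have hℓ₁ : ∀ x, ⟪b, x⟫ + δ = c * s x + (c * β + δ) := by
      intro x
      rw [hb_eq, real_inner_smul_left]
      simp only [hsdef]
      ring
    have hux₁eq : u x₁ = c * s x₁ + (c * β + δ) := by
      rw [hb x₁ (mem_connectedComponentIn hx₁Fc), hℓ₁]
    have hc : c < 0 := by
      by_contra hcn
      push_neg at hcn
      nlinarith [mul_nonneg hcn (neg_nonneg.mpr hsx₁.le)]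
    set t₂ : ℝ := -c with ht₂def
    have ht₂ : 0 < t₂ := by simp only [ht₂def]; linarith
    set l₀ : ℝ := (c * β + δ) / c with hl₀def
    have hl₀ : 0 ≤ l₀ := div_nonneg_iff.mpr (Or.inr ⟨hcβδ, hc.le⟩)
    clear_value t₂ l₀
    have hℓs : ∀ x, ⟪b, x⟫ + δ = -(t₂ * (s x + l₀)) := by
      intro x
      rw [hℓ₁]
      simp only [ht₂def, hl₀def]
      field_simp [hc.ne]
    have hC₁eq : ∀ y ∈ connectedComponentIn Fᶜ x₁, u y = -(t₂ * (s y + l₀)) := by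
      intro y hy; rw [hb y hy, hℓs]
    have htang₁' : ∀ x, -(t₂ * (s x + l₀)) ≤ u x := by
      intro x
      have h1 := htang₁ x
      rw [hℓs x] at h1
      exact h1
    have hC₁lt : ∀ y ∈ connectedComponentIn Fᶜ x₁, s y < -l₀ := by
      intro y hy
      have h1 := (hmemFc y).mp (connectedComponentIn_subset _ _ hy)
      rw [hC₁eq y hy] at h1
      by_contra hcon
      push_neg at hcon
      have h2 : 0 ≤ t₂ * (s y + l₀) := mul_nonneg ht₂.le (by linarith)
      linarith
    have hsx₁'' : s x₁ < -l₀ := hC₁lt x₁ (mem_connectedComponentIn hx₁Fc)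
    have hSltC₁ : {x | s x < -l₀} ⊆ connectedComponentIn Fᶜ x₁ := by
      have hconvS : Convex ℝ {x : EuclideanSpace ℝ (Fin n) | s x < -l₀} := by
        have heq : {x : EuclideanSpace ℝ (Fin n) | s x < -l₀} = {x | ⟪ν, x⟫ < β - l₀} := by
          ext x; simp only [Set.mem_setOf_eq, hsdef]; constructor <;> intro h <;> linarith
        rw [heq]
        exact convex_halfSpace_lt hlinν (β - l₀)
      refine hconvS.isPreconnected.subset_connectedComponentIn hsx₁'' ?_
      intro x hx
      have hx' : s x < -l₀ := hx
      have h9 : (0:ℝ) < -(t₂ * (s x + l₀)) := by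
        have h8 : t₂ * (s x + l₀) < 0 := mul_neg_of_pos_of_neg ht₂ (by linarith)
        linarith
      exact (hmemFc x).mpr (lt_of_lt_of_le h9 (htang₁' x))
    have hsl₀F : ∀ x, s x = -l₀ → u x = 0 := by
      intro x hx
      by_contra h
      have hxFc : x ∈ Fᶜ := (hmemFc x).mpr (lt_of_le_of_ne (hmin0 x) (Ne.symm h))
      have hxcl : x ∈ closure (connectedComponentIn Fᶜ x₁) := by
        rw [Metric.mem_closure_iff]
        intro ε hε
        refine ⟨x + (-(ε/2)) • ν, hSltC₁ ?_, ?_⟩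
        · show s (x + (-(ε/2)) • ν) < -l₀
          rw [hsp, hx]; linarith
        · rw [dist_eq_norm]
          have : x - (x + (-(ε/2)) • ν) = (ε/2) • ν := by
            rw [neg_smul]; abel
          rw [this, norm_smul, hν, Real.norm_eq_abs, abs_of_pos (by positivity : (0:ℝ) < ε/2)]
          linarith
      have hxC₁ := aux_clos hx₁Fc hxcl hxFc
      have := hC₁lt x hxC₁
      rw [hx] at this
      linarith
    have hmid : ∀ x, -l₀ ≤ s x → s x ≤ 0 → u x = 0 := by
      intro x h1 h2
      rcases eq_or_lt_of_le hl₀ with hl | hl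
      · refine hs0F x (le_antisymm h2 ?_)
        rw [← hl] at h1; simpa using h1
      · set xa := x + (-(s x)) • ν with hxadef
        set xb := x + (-l₀ - s x) • ν with hxbdef
        have hsa : s xa = 0 := by rw [hxadef, hsp]; ring
        have hsb : s xb = -l₀ := by rw [hxbdef, hsp]; ring
        have hua : u xa = 0 := hs0F _ hsa
        have hub : u xb = 0 := hsl₀F _ hsb
        set θ : ℝ := (s x + l₀) / l₀ with hθdef
        have hl0' : l₀ ≠ 0 := hl.ne'
        have hθ0 : 0 ≤ θ := by
          rw [hθdef]; apply div_nonneg <;> linarith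
        have hθ1 : 0 ≤ 1 - θ := by
          rw [hθdef]
          rw [sub_nonneg, div_le_one hl]
          linarith
        have hθl : θ * l₀ = s x + l₀ := by
          rw [hθdef, div_mul_cancel₀ _ hl0']
        clear_value θ
        have hcomb : θ • xa + (1 - θ) • xb = x := by
          rw [hxadef, hxbdef]
          match_scalars
          · ring
          · linear_combination hθl
        have h3 := hconv.2 (Set.mem_univ xa) (Set.mem_univ xb) hθ0 hθ1 (by ring)
        rw [hcomb, hua, hub] at h3
        rw [smul_eq_mul, smul_eq_mul] at h3
        have h4 : u x ≤ 0 := by linarith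
        exact le_antisymm h4 (hmin0 x)
    have hmaster : ∀ x, u x = max (t₁ * s x) (max 0 (-(t₂ * (s x + l₀)))) := by
      intro x
      rcases lt_trichotomy (s x) (-l₀) with h | h | h
      · have hsneg : s x < 0 := by linarith
        rw [hC₁eq x (hSltC₁ h)]
        rw [max_eq_right (show (0:ℝ) ≤ -(t₂ * (s x + l₀)) by nlinarith)]
        rw [max_eq_right (show t₁ * s x ≤ -(t₂ * (s x + l₀)) by nlinarith)]
      · rw [hsl₀F x h, h]
        rw [show -(t₂ * (-l₀ + l₀)) = (0:ℝ) by ring, max_self]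
        rw [max_eq_right (show t₁ * -l₀ ≤ (0:ℝ) by nlinarith)]
      · rcases le_or_gt (s x) 0 with h2 | h2
        · rw [hmid x h.le h2]
          rw [max_eq_left (show -(t₂ * (s x + l₀)) ≤ (0:ℝ) by nlinarith)]
          rw [max_eq_right (show t₁ * s x ≤ (0:ℝ) by nlinarith)]
        · rw [hC₀eq x (hSgtC₀ h2)]
          rw [max_eq_left (show -(t₂ * (s x + l₀)) ≤ (0:ℝ) by nlinarith)]
          rw [max_eq_left (show (0:ℝ) ≤ t₁ * s x by nlinarith)]
    have hnA : ¬ (∃ t₁' : ℝ, 0 < t₁' ∧ ∀ x, u x = max (t₁' * s x) 0) := by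
      rintro ⟨a1, ha1, hA⟩
      obtain ⟨q, hq⟩ := hqs (-l₀ - 1)
      have h1 := hA q
      have h2 := htang₁' q
      rw [hq] at h1 h2
      have h3 : u q = 0 := by
        rw [h1, max_eq_right (show a1 * (-l₀ - 1) ≤ (0:ℝ) by nlinarith)]
      nlinarith
    rcases eq_or_lt_of_le hl₀ with hl | hl
    · -- l₀ = 0 : case B
      have hBform : ∀ x, u x = max (t₁ * s x) (-(t₂ * s x)) := by
        intro x
        rw [hmaster x, ← hl, add_zero]
        rcases le_or_gt (s x) 0 with h | h
        · rw [max_eq_right (show (0:ℝ) ≤ -(t₂ * s x) by nlinarith)]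
        · rw [max_eq_left (show -(t₂ * s x) ≤ (0:ℝ) by nlinarith)]
          rw [max_eq_left (show (0:ℝ) ≤ t₁ * s x by nlinarith)]
          rw [max_eq_left (show -(t₂ * s x) ≤ t₁ * s x by nlinarith)]
      have hnC : ¬ (∃ t₁' t₂' l₀' : ℝ, 0 < t₁' ∧ 0 < t₂' ∧ 0 < l₀' ∧
          ∀ x, u x = max (t₁' * s x) (max 0 (-(t₂' * (s x + l₀'))))) := by
        rintro ⟨a1, a2, a3, ha1, ha2, ha3, hC⟩
        obtain ⟨q, hq⟩ := hqs (-(a3/2))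
        have h1 := hC q
        have h2 := hBform q
        rw [hq] at h1 h2
        have h3 : u q = 0 := by
          rw [h1]
          rw [max_eq_left (show -(a2 * (-(a3/2) + a3)) ≤ (0:ℝ) by nlinarith)]
          rw [max_eq_right (show a1 * (-(a3/2)) ≤ (0:ℝ) by nlinarith)]
        have h4 : -(t₂ * (-(a3/2))) ≤ u q := h2 ▸ le_max_right _ _
        nlinarith
      refine ⟨ν, β, hν, ?_⟩
      have hsx : ∀ x : EuclideanSpace ℝ (Fin n), ⟪ν, x⟫ - β = s x := fun x => by rw [hsdef]
      simp only [hsx]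
      exact Or.inr (Or.inl ⟨hnA, ⟨t₁, t₂, ht₁, ht₂, hBform⟩, hnC⟩)
    · -- l₀ > 0 : case C
      have hnB : ¬ (∃ t₁' t₂' : ℝ, 0 < t₁' ∧ 0 < t₂' ∧
          ∀ x, u x = max (t₁' * s x) (-(t₂' * s x))) := by
        rintro ⟨a1, a2, ha1, ha2, hB⟩
        obtain ⟨q, hq⟩ := hqs (-(l₀/2))
        have h1 := hB q
        have h2 : u q = 0 := hmid q (by rw [hq]; linarith) (by rw [hq]; linarith)
        rw [hq, h2] at h1
        have h3 : -(a2 * (-(l₀/2))) ≤ (0:ℝ) := h1 ▸ le_max_right _ _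
        nlinarith
      refine ⟨ν, β, hν, ?_⟩
      have hsx : ∀ x : EuclideanSpace ℝ (Fin n), ⟪ν, x⟫ - β = s x := fun x => by rw [hsdef]
      simp only [hsx]
      exact Or.inr (Or.inr ⟨hnA, hnB, ⟨t₁, t₂, l₀, ht₁, ht₂, hl, hmaster⟩⟩)
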